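/- Let x_1, …, x_N ∈ ℝ^d be such that for every nonzero S ∈ ℝ^d there exists an index i with ⟨S, x_i⟩ > 0 (i.e. the data is not linearly separable from the origin even in the weak sense). Then the function f(S) = Σ_{i=1}^N exp(⟨S, x_i⟩) is coercive — f(S) → ∞ as ‖S‖ → ∞ — and f attains a global minimum at some finite point S_∞ ∈ ℝ^d. -/
import Mathlib


open RealInnerProductSpace Filter

set_option maxHeartbeats 1000000 in
/-- If for every nonzero direction `S` some data point has strictly
positive projection (`⟨S, x_i⟩ > 0`), then the bias-free exponential loss
`f(S) = Σ_i exp(⟨S, x_i⟩)` is coercive (`f(S) → ∞` as `‖S‖ → ∞`) and attains a global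
minimum at some finite point `S_∞`. -/
theorem exponential_loss_coercive_and_attains_min
    (d N : ℕ) (x : Fin N → EuclideanSpace ℝ (Fin d))
    (hinsep : ∀ S : EuclideanSpace ℝ (Fin d), S ≠ 0 → ∃ i, 0 < ⟪S, x i⟫) :
    Tendsto (fun S : EuclideanSpace ℝ (Fin d) => ∑ i, Real.exp ⟪S, x i⟫)
      (Filter.comap (fun S : EuclideanSpace ℝ (Fin d) => ‖S‖) atTop) atTop ∧
    ∃ Sinf : EuclideanSpace ℝ (Fin d),
      ∀ S : EuclideanSpace ℝ (Fin d),
        (∑ i, Real.exp ⟪Sinf, x i⟫) ≤ ∑ i, Real.exp ⟪S, x i⟫ := by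
  have hcont : Continuous (fun S : EuclideanSpace ℝ (Fin d) => ∑ i, Real.exp ⟪S, x i⟫) :=
    continuous_finset_sum _ fun i _ =>
      Real.continuous_exp.comp (continuous_id.inner continuous_const)
  have hcomap : comap (fun S : EuclideanSpace ℝ (Fin d) => ‖S‖) atTop
      = Filter.cocompact (EuclideanSpace ℝ (Fin d)) := by
    rw [comap_norm_atTop, Metric.cobounded_eq_cocompact]
  have hco : Tendsto (fun S : EuclideanSpace ℝ (Fin d) => ∑ i, Real.exp ⟪S, x i⟫)
      (Filter.cocompact (EuclideanSpace ℝ (Fin d))) atTop := by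
    rcases subsingleton_or_nontrivial (EuclideanSpace ℝ (Fin d)) with hsub | hnt
    · haveI : CompactSpace (EuclideanSpace ℝ (Fin d)) := Finite.compactSpace
      rw [Filter.cocompact_eq_bot]
      exact tendsto_bot
    · obtain ⟨S₀, hS₀⟩ := exists_ne (0 : EuclideanSpace ℝ (Fin d))
      obtain ⟨i₀, _⟩ := hinsep S₀ hS₀
      haveI : Nonempty (Fin N) := ⟨i₀⟩
      have hgcont : Continuous (fun u : EuclideanSpace ℝ (Fin d) =>
          Finset.univ.sup' Finset.univ_nonempty (fun i => ⟪u, x i⟫)) :=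
        Continuous.finset_sup'_apply Finset.univ_nonempty fun i _ =>
          continuous_id.inner continuous_const
      have hsphere : (Metric.sphere (0 : EuclideanSpace ℝ (Fin d)) 1).Nonempty :=
        NormedSpace.sphere_nonempty.mpr zero_le_one
      obtain ⟨u₀, hu₀mem, hu₀min⟩ :=
        (isCompact_sphere (0 : EuclideanSpace ℝ (Fin d)) 1).exists_isMinOn hsphere
          hgcont.continuousOn
      set ε := Finset.univ.sup' Finset.univ_nonempty (fun i => ⟪u₀, x i⟫) with hε
      have hεpos : 0 < ε := by
        have hu₀ne : u₀ ≠ 0 := by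
          intro h
          rw [h] at hu₀mem
          simp at hu₀mem
        obtain ⟨i, hi⟩ := hinsep u₀ hu₀ne
        calc (0 : ℝ) < ⟪u₀, x i⟫ := hi
          _ ≤ ε := Finset.le_sup' (fun j => ⟪u₀, x j⟫) (Finset.mem_univ i)
      have key : ∀ S : EuclideanSpace ℝ (Fin d), S ≠ 0 →
          Real.exp (ε * ‖S‖) ≤ ∑ i, Real.exp ⟪S, x i⟫ := by
        intro S hS
        have hnS : 0 < ‖S‖ := norm_pos_iff.mpr hS
        have humem : ‖S‖⁻¹ • S ∈ Metric.sphere (0 : EuclideanSpace ℝ (Fin d)) 1 := by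
          simp [norm_smul, abs_of_pos (inv_pos.mpr hnS), inv_mul_cancel₀ hnS.ne']
        have hgu : ε ≤ Finset.univ.sup' Finset.univ_nonempty
            (fun i => ⟪‖S‖⁻¹ • S, x i⟫) := hu₀min humem
        obtain ⟨i, -, hi⟩ := Finset.exists_mem_eq_sup' (Finset.univ_nonempty (α := Fin N))
          (fun i => ⟪‖S‖⁻¹ • S, x i⟫)
        have hiu : ε ≤ ⟪‖S‖⁻¹ • S, x i⟫ := by rw [← hi]; exact hgu
        have hinner : ε * ‖S‖ ≤ ⟪S, x i⟫ := by
          have h2 : ⟪‖S‖⁻¹ • S, x i⟫ = ‖S‖⁻¹ * ⟪S, x i⟫ := by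
            simp [real_inner_smul_left, Finset.mul_sum, mul_assoc]
          rw [h2] at hiu
          calc ε * ‖S‖ ≤ (‖S‖⁻¹ * ⟪S, x i⟫) * ‖S‖ :=
                mul_le_mul_of_nonneg_right hiu hnS.le
            _ = ⟪S, x i⟫ := by field_simp
        calc Real.exp (ε * ‖S‖) ≤ Real.exp ⟪S, x i⟫ := Real.exp_le_exp.mpr hinner
          _ ≤ ∑ i, Real.exp ⟪S, x i⟫ :=
            Finset.single_le_sum (f := fun j => Real.exp ⟪S, x j⟫) (fun j _ => (Real.exp_pos _).le) (Finset.mem_univ i)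
      rw [← hcomap]
      have h1 : Tendsto (fun S : EuclideanSpace ℝ (Fin d) => Real.exp (ε * ‖S‖))
          (comap (fun S : EuclideanSpace ℝ (Fin d) => ‖S‖) atTop) atTop :=
        Real.tendsto_exp_atTop.comp ((tendsto_const_mul_atTop_of_pos hεpos).mpr tendsto_comap)
      refine tendsto_atTop_mono' _ ?_ h1
      filter_upwards [tendsto_comap.eventually (eventually_ge_atTop 1)] with S hS
      exact key S (by intro h; rw [h] at hS; simp at hS; linarith)
  exact ⟨hcomap ▸ hco, hcont.exists_forall_le hco⟩
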